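/- Let S be a ring and C a cochain complex of S-modules. If for every S-module m and every integer n, every chain map Σ^n m → C (with m regarded as a complex concentrated in degree zero) is null homotopic, then C is contractible, i.e., the identity chain map of C is null homotopic. -/

import Mathlib

open CategoryTheory

/-- A module viewed as a cochain complex concentrated in degree zero. -/
noncomputable def sing (R : Type) [Ring R] (M : ModuleCat R) :
    CochainComplex (ModuleCat R) ℤ :=
  (HomologicalComplex.single (ModuleCat R) (ComplexShape.up ℤ) 0).obj M

lemma key_lift (S : Type) [Ring S] (C : CochainComplex (ModuleCat S) ℤ)
    (h : ∀ (m : ModuleCat S) (n : ℤ)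
      (u : (sing S m)⟦n⟧ ⟶ C), Nonempty (Homotopy u 0))
    (e d : ℤ) (he : e + 1 = d) (m : ModuleCat S) (f : m ⟶ C.X d)
    (hf : f ≫ C.d d (d + 1) = 0) :
    ∃ g : m ⟶ C.X e, g ≫ C.d e d = f := by
  have hrel : (ComplexShape.up ℤ).Rel e d := he
  have hrel' : (ComplexShape.up ℤ).Rel d (d + 1) := rfl
  set v : (HomologicalComplex.single (ModuleCat S) (ComplexShape.up ℤ) d).obj m ⟶ C :=
    HomologicalComplex.mkHomFromSingle f (fun k hk => by
      obtain rfl : k = d + 1 := hk.symm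
      exact hf)
  set eIso := ((CochainComplex.singleFunctors (ModuleCat S)).shiftIso (-d) d 0
    (by omega)).app m
  obtain ⟨H⟩ := h m (-d) (eIso.hom ≫ v)
  have H2 : Homotopy v 0 :=
    (Homotopy.ofEq (eIso.inv_hom_id_assoc v).symm).trans
      ((H.compLeft eIso.inv).trans (Homotopy.ofEq (by exact Limits.comp_zero)))
  refine ⟨(HomologicalComplex.singleObjXSelf (ComplexShape.up ℤ) d m).inv ≫ H2.hom d e, ?_⟩
  have hc := H2.comm d
  rw [dNext_eq H2.hom hrel', prevD_eq H2.hom hrel] at hc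
  have hsd : ((HomologicalComplex.single (ModuleCat S) (ComplexShape.up ℤ) d).obj m).d d (d+1)
      = 0 := by
    apply (HomologicalComplex.isZero_single_obj_X (ComplexShape.up ℤ) d m (d+1)
      (by omega)).eq_of_tgt
  rw [HomologicalComplex.mkHomFromSingle_f] at hc
  simp only [hsd, Limits.zero_comp, zero_add, HomologicalComplex.zero_f_apply, add_zero] at hc
  rw [Category.assoc, ← hc, ← Category.assoc, Iso.inv_hom_id, Category.id_comp]

/-!
STATEMENT 8: if C is a cochain complex of S-modules such that for every S-module m and
every integer n, every chain map Σ^n m → C is null homotopic, then C is contractible.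
-/
theorem stmt_8 (S : Type) [Ring S] (C : CochainComplex (ModuleCat S) ℤ)
    (h : ∀ (m : ModuleCat S) (n : ℤ)
      (u : (sing S m)⟦n⟧ ⟶ C), Nonempty (Homotopy u 0)) :
    Nonempty (Homotopy (𝟙 C) 0) := by
  classical
  -- the cocycles in degree `j`
  let Z : ℤ → ModuleCat S := fun j => ModuleCat.of S (LinearMap.ker (C.d j (j + 1)).hom)
  -- choose splittings of the differentials onto the cocycles
  have hσ : ∀ (i j : ℤ), i + 1 = j → ∃ σ : Z j ⟶ C.X i,
      ∀ z : Z j, C.d i j (σ z) = z.1 := by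
    intro i j hij
    obtain ⟨g, hg⟩ := key_lift S C h i j hij (Z j)
      (ModuleCat.ofHom (LinearMap.ker (C.d j (j + 1)).hom).subtype)
      (by
        ext z
        exact z.2)
    exact ⟨g, fun z => by exact ConcreteCategory.congr_hom hg z⟩
  choose σ hσ' using hσ
  -- the differential, corestricted to the cocycles
  let δ : ∀ i : ℤ, C.X i →ₗ[S] Z (i + 1) := fun i =>
    LinearMap.codRestrict _ (C.d i (i + 1)).hom (fun x => by
      show (C.d i (i + 1) ≫ C.d (i + 1) (i + 1 + 1)) x = 0
      rw [C.d_comp_d]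
      rfl)
  -- the projection `x ↦ x - σ (d x)` onto the cocycles
  let ρ : ∀ i : ℤ, C.X i →ₗ[S] Z i := fun i =>
    LinearMap.codRestrict _ (LinearMap.id - ((σ i (i + 1) rfl).hom.comp
      (δ i))) (fun x => by
        simp only [LinearMap.mem_ker, LinearMap.sub_apply, LinearMap.id_apply,
          LinearMap.coe_comp, Function.comp_apply, map_sub]
        rw [hσ' i (i + 1) rfl]
        exact sub_self _)
  -- the homotopy components
  let τ : ∀ (i j : ℤ), j + 1 = i → (C.X i ⟶ C.X j) := fun i j hij =>
    ModuleCat.ofHom ((σ j i hij).hom.comp (ρ i))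
  refine ⟨{
    hom := fun i j => if hij : j + 1 = i then τ i j hij else 0
    zero := fun i j hij => dif_neg hij
    comm := fun i => ?_ }⟩
  have hrel₁ : (ComplexShape.up ℤ).Rel i (i + 1) := rfl
  have hrel₂ : (ComplexShape.up ℤ).Rel (i - 1) i := by
    simp only [ComplexShape.up_Rel]; omega
  rw [dNext_eq _ hrel₁, prevD_eq _ hrel₂, dif_pos rfl, dif_pos (show (i - 1) + 1 = i by omega)]
  ext x
  have hδcoe : ∀ (k : ℤ) (y : C.X k), (δ k y).1 = C.d k (k + 1) y :=
    fun k y => rfl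
  have hρcoe : ∀ (k : ℤ) (y : C.X k),
      (ρ k y).1 = y - σ k (k + 1) rfl (δ k y) := fun k y => rfl
  have hδ0 : δ (i + 1) (C.d i (i + 1) x) = 0 := by
    apply Subtype.ext
    rw [hδcoe]
    show (C.d i (i + 1) ≫ C.d (i + 1) (i + 1 + 1)) x = (0 : Z (i + 1 + 1)).1
    rw [C.d_comp_d]
    rfl
  have hρ : ρ (i + 1) (C.d i (i + 1) x) = δ i x := by
    apply Subtype.ext
    rw [hρcoe, hδ0, map_zero, sub_zero, hδcoe]
  have e1 : τ (i + 1) i rfl (C.d i (i + 1) x) = σ i (i + 1) rfl (δ i x) := by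
    show σ i (i + 1) rfl (ρ (i + 1) (C.d i (i + 1) x)) = _
    rw [hρ]
  have e2 : C.d (i - 1) i (τ i (i - 1) (show (i - 1) + 1 = i by omega) x)
      = x - σ i (i + 1) rfl (δ i x) := by
    show C.d (i - 1) i (σ (i - 1) i (show (i - 1) + 1 = i by omega) (ρ i x)) = _
    rw [hσ' (i - 1) i (show (i - 1) + 1 = i by omega) (ρ i x), hρcoe]
  have : ((𝟙 C : C ⟶ C).f i) x = x := rfl
  rw [this]
  have hconc : (C.d i (i + 1) ≫ τ (i + 1) i rfl
      + τ i (i - 1) (show (i - 1) + 1 = i by omega) ≫ C.d (i - 1) i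
      + (0 : C ⟶ C).f i) x
      = τ (i + 1) i rfl (C.d i (i + 1) x)
        + C.d (i - 1) i (τ i (i - 1) (show (i - 1) + 1 = i by omega) x) + 0 := rfl
  rw [hconc, e1, e2]
  abel
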